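/- For d = 2 and every s ≥ 1, the generalized bracelet set is the same as for s = 1: Brac_{2,s} = {((p, 1−p), (1−p, p)) : p ∈ [0,1]}. In particular, if A₁, A₂, B₁, B₂ are s×s complex matrices with A₁A₁* + A₂A₂* = B₁B₁* + B₂B₂* = I_s and A₁B₁* + A₂B₂* = 0, then (1/s)·Tr(A₁A₁*) + (1/s)·Tr(B₁B₁*) = 1. -/

import Mathlib

open Matrix

lemma key_trace {s : ℕ} (A₁ A₂ B₁ B₂ : Matrix (Fin s) (Fin s) ℂ)
    (hA : A₁ * A₁ᴴ + A₂ * A₂ᴴ = 1) (hB : B₁ * B₁ᴴ + B₂ * B₂ᴴ = 1)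
    (hAB : A₁ * B₁ᴴ + A₂ * B₂ᴴ = 0) :
    (A₁ * A₁ᴴ).trace + (B₁ * B₁ᴴ).trace = (s : ℂ) := by
  have hBA : B₁ * A₁ᴴ + B₂ * A₂ᴴ = 0 := by
    have := congrArg conjTranspose hAB
    simpa [conjTranspose_add, conjTranspose_mul] using this
  have hUU : (fromBlocks A₁ A₂ B₁ B₂) * (fromBlocks A₁ A₂ B₁ B₂)ᴴ = 1 := by
    rw [fromBlocks_conjTranspose, fromBlocks_multiply, hA, hB, hAB, hBA, fromBlocks_one]
  have hUU' := mul_eq_one_comm.mp hUU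
  rw [fromBlocks_conjTranspose, fromBlocks_multiply, ← fromBlocks_one] at hUU'
  have h11 : A₁ᴴ * A₁ + B₁ᴴ * B₁ = 1 := (fromBlocks_inj.mp hUU').1
  have ht := congrArg Matrix.trace h11
  rw [trace_add, trace_one] at ht
  rw [trace_mul_comm A₁, trace_mul_comm B₁]
  simpa using ht

lemma frob_trace {s : ℕ} (A : Matrix (Fin s) (Fin s) ℂ) :
    (A * Aᴴ).trace = ((∑ k, ∑ l, ‖A k l‖ ^ 2 : ℝ) : ℂ) := by
  simp only [trace, diag, mul_apply, conjTranspose_apply]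
  push_cast
  congr 1
  ext k
  congr 1
  ext l
  rw [show star (A k l) = (starRingEnd ℂ) (A k l) from rfl, Complex.mul_conj]
  norm_cast
  rw [← Complex.sq_norm]

lemma frob_smul_one {s : ℕ} (hs : 1 ≤ s) (a : ℝ) :
    (1 / (s : ℝ)) * ∑ k : Fin s, ∑ l : Fin s,
      ‖(((a : ℂ) • (1 : Matrix (Fin s) (Fin s) ℂ)) k l)‖ ^ 2 = a ^ 2 := by
  have hs' : (s : ℝ) ≠ 0 := by positivity
  have h : ∀ k : Fin s, ∑ l : Fin s,
      ‖(((a : ℂ) • (1 : Matrix (Fin s) (Fin s) ℂ)) k l)‖ ^ 2 = a ^ 2 := by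
    intro k
    simp only [Matrix.smul_apply, Matrix.one_apply, smul_eq_mul, mul_ite, mul_one, mul_zero]
    rw [Finset.sum_eq_single k] <;>
      simp +contextual [Complex.norm_real, sq_abs, eq_comm]
  rw [Finset.sum_congr rfl fun k _ => h k]
  simp only [Finset.sum_const, Finset.card_univ, Fintype.card_fin, nsmul_eq_mul]
  field_simp

lemma smul_mul_conj {s : ℕ} (a b : ℝ) :
    ((a : ℂ) • (1 : Matrix (Fin s) (Fin s) ℂ)) * ((b : ℂ) • (1 : Matrix (Fin s) (Fin s) ℂ))ᴴ
      = ((a * b : ℝ) : ℂ) • (1 : Matrix (Fin s) (Fin s) ℂ) := by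
  rw [conjTranspose_smul, conjTranspose_one, Complex.star_def, Complex.conj_ofReal,
    smul_mul_assoc, mul_smul_comm, one_mul, smul_smul]
  push_cast
  rfl

/-- The pair of probability vectors `(α, β)` satisfies
the generalized bracelet condition of order `s`. -/
def Brac (d s : ℕ) (α β : Fin d → ℝ) : Prop :=
  (∀ i, 0 ≤ α i) ∧ (∑ i, α i = 1) ∧ (∀ i, 0 ≤ β i) ∧ (∑ i, β i = 1) ∧
  ∃ A B : Fin d → Matrix (Fin s) (Fin s) ℂ,
    (∑ i, A i * (A i)ᴴ = 1) ∧ (∑ i, B i * (B i)ᴴ = 1) ∧ (∑ i, A i * (B i)ᴴ = 0) ∧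
    (∀ i, (1 / (s : ℝ)) * ∑ k, ∑ l, ‖A i k l‖ ^ 2 = α i) ∧
    (∀ i, (1 / (s : ℝ)) * ∑ k, ∑ l, ‖B i k l‖ ^ 2 = β i)

theorem brac_two_s (s : ℕ) (hs : 1 ≤ s) :
    (∀ α β : Fin 2 → ℝ,
      Brac 2 s α β ↔ ∃ p ∈ Set.Icc (0 : ℝ) 1, α = ![p, 1 - p] ∧ β = ![1 - p, p]) ∧
    (∀ A₁ A₂ B₁ B₂ : Matrix (Fin s) (Fin s) ℂ,
      A₁ * A₁ᴴ + A₂ * A₂ᴴ = 1 → B₁ * B₁ᴴ + B₂ * B₂ᴴ = 1 → A₁ * B₁ᴴ + A₂ * B₂ᴴ = 0 →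
      (1 / (s : ℂ)) * (A₁ * A₁ᴴ).trace + (1 / (s : ℂ)) * (B₁ * B₁ᴴ).trace = 1) := by
  have hsR : (s : ℝ) ≠ 0 := by positivity
  have hsC : (s : ℂ) ≠ 0 := by exact_mod_cast (Nat.cast_ne_zero (R := ℂ)).mpr (by omega)
  constructor
  · intro α β
    constructor
    · rintro ⟨hα0, hα1, hβ0, hβ1, A, B, hAA, hBB, hAB, hαf, hβf⟩
      have hk := key_trace (A 0) (A 1) (B 0) (B 1)
        (by simpa [Fin.sum_univ_two] using hAA)
        (by simpa [Fin.sum_univ_two] using hBB)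
        (by simpa [Fin.sum_univ_two] using hAB)
      rw [frob_trace, frob_trace] at hk
      have hk' : (∑ k, ∑ l, ‖A 0 k l‖ ^ 2) + (∑ k, ∑ l, ‖B 0 k l‖ ^ 2) = (s : ℝ) := by
        exact_mod_cast hk
      have hsum : α 0 + β 0 = 1 := by
        rw [← hαf 0, ← hβf 0, ← mul_add, hk']
        field_simp
      have hα01 : α 0 + α 1 = 1 := by simpa [Fin.sum_univ_two] using hα1
      have hβ01 : β 0 + β 1 = 1 := by simpa [Fin.sum_univ_two] using hβ1
      refine ⟨α 0, ⟨hα0 0, by nlinarith [hα0 1]⟩, ?_, ?_⟩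
      · funext i
        fin_cases i <;> simp <;> linarith
      · funext i
        fin_cases i <;> simp <;> linarith
    · rintro ⟨p, ⟨hp0, hp1⟩, rfl, rfl⟩
      have h1p : (0:ℝ) ≤ 1 - p := by linarith
      refine ⟨?_, ?_, ?_, ?_,
        ![(Real.sqrt p : ℂ) • 1, (Real.sqrt (1 - p) : ℂ) • 1],
        ![(Real.sqrt (1 - p) : ℂ) • 1, -((Real.sqrt p : ℂ) • 1)],
        ?_, ?_, ?_, ?_, ?_⟩
      · intro i; fin_cases i <;> simp [hp0, h1p]
      · simp [Fin.sum_univ_two]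
      · intro i; fin_cases i <;> simp [hp0, h1p]
      · simp [Fin.sum_univ_two]
      · rw [Fin.sum_univ_two]
        simp only [Matrix.cons_val_zero, Matrix.cons_val_one, Matrix.head_cons]
        rw [smul_mul_conj, smul_mul_conj, Real.mul_self_sqrt hp0, Real.mul_self_sqrt h1p,
          ← add_smul]
        norm_num
      · rw [Fin.sum_univ_two]
        simp only [Matrix.cons_val_zero, Matrix.cons_val_one, Matrix.head_cons,
          conjTranspose_neg, mul_neg, neg_mul, neg_neg]
        rw [smul_mul_conj, smul_mul_conj, Real.mul_self_sqrt h1p, Real.mul_self_sqrt hp0,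
          ← add_smul]
        norm_num
      · rw [Fin.sum_univ_two]
        simp only [Matrix.cons_val_zero, Matrix.cons_val_one, Matrix.head_cons,
          conjTranspose_neg, mul_neg]
        rw [smul_mul_conj, smul_mul_conj, mul_comm (Real.sqrt (1 - p))]
        rw [← sub_eq_add_neg, sub_self]
      · intro i
        fin_cases i <;>
        · simp only [Fin.zero_eta, Fin.mk_one, Matrix.cons_val_zero, Matrix.cons_val_one, Matrix.head_cons]
          rw [frob_smul_one hs]
          simp [Real.sq_sqrt hp0, Real.sq_sqrt h1p]
      · intro i
        fin_cases i
        · simp only [Fin.zero_eta, Matrix.cons_val_zero]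
          rw [frob_smul_one hs]
          simp [Real.sq_sqrt h1p]
        · simp only [Fin.mk_one, Matrix.cons_val_one, Matrix.head_cons, Matrix.cons_val_zero]
          have : ∀ k l : Fin s, ‖(-((Real.sqrt p : ℂ) • (1 : Matrix (Fin s) (Fin s) ℂ))) k l‖
              = ‖(((Real.sqrt p : ℂ) • (1 : Matrix (Fin s) (Fin s) ℂ))) k l‖ := by
            intro k l; simp [Matrix.neg_apply]
          simp only [this]
          rw [frob_smul_one hs]
          simp [Real.sq_sqrt hp0]
  · intro A₁ A₂ B₁ B₂ hA hB hAB
    have hk := key_trace A₁ A₂ B₁ B₂ hA hB hAB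
    rw [← mul_add, hk]
    field_simp
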